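/- If L(n) = o(n/log n) as n → ∞, then the sum of the reciprocals of the awkward primes converges. -/
import Mathlib


open scoped Classical

/-- The `k`-th prime (1-indexed): `nthPrime 1 = 2`. -/
noncomputable def nthPrime (k : ℕ) : ℕ := Nat.nth Nat.Prime (k - 1)

/-- A (straight) line in the plane. -/
def IsLine (l : Set (ℝ × ℝ)) : Prop :=
  ∃ a b c : ℝ, (a, b) ≠ (0, 0) ∧ l = {p : ℝ × ℝ | a * p.1 + b * p.2 = c}

/-- The `k`-th prime point `(k, p_k)`. -/
noncomputable def primePoint (k : ℕ) : ℝ × ℝ := ((k : ℝ), (nthPrime k : ℝ))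

/-- `L n`: the minimum number of lines needed to cover the first `n` prime points. -/
noncomputable def L (n : ℕ) : ℕ :=
  sInf {m : ℕ | ∃ S : Finset (Set (ℝ × ℝ)), S.card = m ∧ (∀ l ∈ S, IsLine l) ∧
    ∀ k : ℕ, 1 ≤ k → k ≤ n → ∃ l ∈ S, primePoint k ∈ l}

/-- `B n`: the largest number of the first `n` prime points lying on a single line. -/
noncomputable def B (n : ℕ) : ℕ :=
  sSup {m : ℕ | ∃ l : Set (ℝ × ℝ), IsLine l ∧
    m = ((Finset.Icc 1 n).filter (fun k => primePoint k ∈ l)).card}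

open Finset Filter
open scoped Nat

def LSet (n : ℕ) : Set ℕ := {m : ℕ | ∃ S : Finset (Set (ℝ × ℝ)), S.card = m ∧ (∀ l ∈ S, IsLine l) ∧
    ∀ k : ℕ, 1 ≤ k → k ≤ n → ∃ l ∈ S, primePoint k ∈ l}

lemma LSet_nonempty (n : ℕ) : (LSet n).Nonempty := by
  classical
  set F : ℕ → Set (ℝ × ℝ) := fun k => {p : ℝ × ℝ | 1 * p.1 + 0 * p.2 = (k : ℝ)} with hF
  refine ⟨((Finset.Icc 1 n).image F).card, _, rfl, ?_, ?_⟩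
  · intro l hl
    rcases Finset.mem_image.mp hl with ⟨k, _, rfl⟩
    exact ⟨1, 0, (k : ℝ), by norm_num, rfl⟩
  · intro k hk1 hk2
    refine ⟨F k, Finset.mem_image_of_mem F (Finset.mem_Icc.mpr ⟨hk1, hk2⟩), ?_⟩
    simp [primePoint, hF]

lemma L_mem (n : ℕ) : L n ∈ LSet n := Nat.sInf_mem (LSet_nonempty n)

lemma L_zero : L 0 = 0 :=
  Nat.eq_zero_of_le_zero (Nat.sInf_le ⟨∅, by simp, by simp, fun k hk1 hk2 => by omega⟩)

lemma L_mono : Monotone L := by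
  intro m n hmn
  obtain ⟨S, hcard, hlines, hcov⟩ := L_mem n
  exact Nat.sInf_le ⟨S, hcard, hlines, fun k hk1 hk2 => hcov k hk1 (hk2.trans hmn)⟩

noncomputable def Acount (n : ℕ) : ℕ :=
  ((Finset.Icc 1 n).filter (fun j => L (j - 1) < L j)).card

lemma Acount_zero : Acount 0 = 0 := by simp [Acount]

lemma Acount_succ (n : ℕ) :
    Acount (n + 1) = Acount n + (if L n < L (n + 1) then 1 else 0) := by
  classical
  have h : Finset.Icc 1 (n + 1) = insert (n + 1) (Finset.Icc 1 n) := by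
    ext x; simp [Finset.mem_Icc, Finset.mem_insert]; omega
  have hnotmem : (n + 1) ∉ Finset.Icc 1 n := by simp
  rw [Acount, h, Finset.filter_insert]
  simp only [Nat.add_sub_cancel]
  split_ifs with hawk
  · rw [Finset.card_insert_of_notMem (fun hc => hnotmem (Finset.mem_filter.mp hc).1)]
    rfl
  · simp [Acount]

lemma Acount_le_L (n : ℕ) : Acount n ≤ L n := by
  induction n with
  | zero => simp [Acount_zero]
  | succ n ih =>
    rw [Acount_succ]
    split_ifs with hawk
    · omega
    · exact le_trans ih (L_mono (Nat.le_succ n))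

lemma Acount_mono : Monotone Acount := by
  intro m n hmn
  exact Finset.card_le_card (Finset.filter_subset_filter _ (Finset.Icc_subset_Icc_right hmn))

lemma Acount_le_self (n : ℕ) : Acount n ≤ n := by
  refine le_trans (Finset.card_filter_le _ _) ?_
  simp [Nat.card_Icc]

lemma Acount_lt_of_awkward {j : ℕ} (h1 : 1 ≤ j) (h2 : L (j - 1) < L j) :
    Acount (j - 1) < Acount j := by
  obtain ⟨i, rfl⟩ : ∃ i, j = i + 1 := ⟨j - 1, by omega⟩
  rw [Acount_succ]
  simp only [Nat.add_sub_cancel] at h2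
  simp [h2]

lemma Acount_strict {j j' : ℕ} (hj : 1 ≤ j) (hj' : 1 ≤ j') (hlt : j < j')
    (h2 : L (j' - 1) < L j') : Acount j < Acount j' := by
  calc Acount j ≤ Acount (j' - 1) := Acount_mono (by omega)
    _ < Acount j' := Acount_lt_of_awkward hj' h2

lemma one_le_Acount_of_awkward {j : ℕ} (h1 : 1 ≤ j) (h2 : L (j - 1) < L j) :
    1 ≤ Acount j := by
  have := Acount_lt_of_awkward h1 h2
  omega

lemma factorial_le_four_pow {j : ℕ} (hj : 1 ≤ j) : j ! ≤ 4 ^ nthPrime j := by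
  classical
  have h1 : j ! ≤ ∏ i ∈ Finset.range j, Nat.nth Nat.Prime i := by
    rw [← Finset.prod_range_add_one_eq_factorial]
    exact Finset.prod_le_prod' (fun i _ => by have := Nat.add_two_le_nth_prime i; omega)
  have h2 : (∏ i ∈ Finset.range j, Nat.nth Nat.Prime i) ≤ primorial (nthPrime j) := by
    have hinj := (Nat.nth_strictMono Nat.infinite_setOf_prime).injective
    have heq : ∏ x ∈ (Finset.range j).image (Nat.nth Nat.Prime), x
        = ∏ i ∈ Finset.range j, Nat.nth Nat.Prime i :=
      Finset.prod_image (fun a _ b _ h => hinj h)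
    rw [← heq]
    refine Finset.prod_le_prod_of_subset_of_one_le' ?_ ?_
    · intro x hx
      rcases Finset.mem_image.mp hx with ⟨i, hi, rfl⟩
      simp only [Finset.mem_range] at hi
      simp only [primorial, Finset.mem_filter, Finset.mem_range]
      constructor
      · have : Nat.nth Nat.Prime i ≤ Nat.nth Nat.Prime (j - 1) :=
          (Nat.nth_le_nth Nat.infinite_setOf_prime).mpr (by omega)
        unfold nthPrime; omega
      · exact Nat.prime_nth_prime i
    · intro x hx _
      exact (Finset.mem_filter.mp hx).2.one_lt.le
  exact h1.trans (h2.trans (primorial_le_4_pow _))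

lemma half_pow_le_four_pow {j : ℕ} (hj : 1 ≤ j) : (j / 2) ^ (j / 2) ≤ 4 ^ nthPrime j := by
  refine le_trans ?_ (factorial_le_four_pow hj)
  calc (j / 2) ^ (j / 2) ≤ (j + 1 - j / 2) ^ (j / 2) := Nat.pow_le_pow_left (by omega) _
    _ ≤ j.descFactorial (j / 2) := Nat.pow_sub_le_descFactorial j (j / 2)
    _ ≤ j ! := by
        have h := Nat.factorial_mul_descFactorial (Nat.div_le_self j 2)
        calc j.descFactorial (j / 2) ≤ (j - j / 2)! * j.descFactorial (j / 2) :=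
              Nat.le_mul_of_pos_left _ (Nat.factorial_pos _)
          _ = j ! := h

lemma nthPrime_lower {j : ℕ} (hj : 16 ≤ j) :
    (j : ℝ) * Real.log j ≤ 12 * (nthPrime j : ℝ) := by
  set q := j / 2 with hq
  have hq8 : 8 ≤ q := by omega
  have hq4 : (j : ℝ) ≤ 4 * q := by exact_mod_cast (show j ≤ 4 * (j / 2) by omega)
  have hqj : (q : ℝ) * 4 ≥ (j : ℝ) := by linarith
  have hqpos : (0 : ℝ) < q := by exact_mod_cast (show 0 < q by omega)
  have hjpos : (0 : ℝ) < j := by positivity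
  have hcast : ((q : ℝ)) ^ (q : ℕ) ≤ (4 : ℝ) ^ (nthPrime j : ℕ) := by
    exact_mod_cast half_pow_le_four_pow (show 1 ≤ j by omega)
  have hlog : (q : ℝ) * Real.log q ≤ (nthPrime j : ℝ) * Real.log 4 := by
    have h := Real.log_le_log (by positivity) hcast
    rwa [Real.log_pow, Real.log_pow] at h
  have hlog4 : Real.log 4 = 2 * Real.log 2 := by
    rw [show (4 : ℝ) = 2 ^ 2 by norm_num, Real.log_pow]; norm_num
  have hlog2 : Real.log 2 < 0.6931471808 := Real.log_two_lt_d9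
  have hlog2pos : 0 < Real.log 2 := Real.log_pos (by norm_num)
  -- log q ≥ log (j/4) = log j - log 4 ≥ log j / 2
  have hj16 : (16 : ℝ) ≤ j := by exact_mod_cast hj
  have hlogj16 : Real.log 16 ≤ Real.log j := Real.log_le_log (by norm_num) hj16
  have hlog16 : Real.log 16 = 4 * Real.log 2 := by
    rw [show (16 : ℝ) = 2 ^ 4 by norm_num, Real.log_pow]; norm_num
  have hlq : Real.log j / 2 ≤ Real.log q := by
    have h1 : Real.log ((j : ℝ) / 4) ≤ Real.log q :=
      Real.log_le_log (by positivity) (by linarith)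
    rw [Real.log_div (by positivity) (by norm_num)] at h1
    linarith
  have hlogjpos : 0 < Real.log j := by linarith
  have hp : (0 : ℝ) ≤ (nthPrime j : ℝ) := Nat.cast_nonneg _
  -- j log j ≤ 4 q log j ≤ 8 q log q ≤ 8 p log 4 < 12 p
  nlinarith [mul_le_mul_of_nonneg_right hq4 hlogjpos.le,
    mul_le_mul_of_nonneg_left hlq (by positivity : (0:ℝ) ≤ 8 * q)]

noncomputable def gmaj (a : ℕ) : ℝ := if a ≤ 1 then 1 else 6 / (a * Real.log a ^ 2)

lemma gmaj_nonneg (a : ℕ) : 0 ≤ gmaj a := by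
  unfold gmaj; split_ifs
  · norm_num
  · positivity

lemma summable_hfun : Summable (fun n : ℕ => 1 / (((n : ℝ) + 1) * Real.log ((n : ℝ) + 1) ^ 2)) := by
  set f : ℕ → ℝ := fun n => 1 / (((n : ℝ) + 1) * Real.log ((n : ℝ) + 1) ^ 2) with hf
  have h_nonneg : ∀ n, 0 ≤ f n := fun n => by positivity
  have h_mono : ∀ ⦃m n : ℕ⦄, 0 < m → m ≤ n → f n ≤ f m := by
    intro m n hm hmn
    have hm1 : (1 : ℝ) < (m : ℝ) + 1 := by
      have : (1 : ℝ) ≤ m := by exact_mod_cast hm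
      linarith
    have hmn' : ((m : ℝ) + 1) ≤ (n : ℝ) + 1 := by
      have : (m : ℝ) ≤ n := by exact_mod_cast hmn
      linarith
    have hlm : 0 < Real.log ((m : ℝ) + 1) := Real.log_pos hm1
    apply one_div_le_one_div_of_le
    · exact mul_pos (by linarith) (pow_pos hlm 2)
    · apply mul_le_mul hmn'
      · apply pow_le_pow_left₀ hlm.le (Real.log_le_log (by linarith) hmn')
      · positivity
      · linarith
  rw [← summable_condensed_iff_of_nonneg h_nonneg h_mono]
  have hbound : ∀ k : ℕ, (2 : ℝ) ^ k * f (2 ^ k) ≤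
      (4 / Real.log 2 ^ 2) * (1 / ((k : ℝ) + 1) ^ 2) := by
    intro k
    have hx : ((2 ^ k : ℕ) : ℝ) = 2 ^ k := by push_cast; ring
    have h2k : (0 : ℝ) < 2 ^ k := by positivity
    have hlog2 : 0 < Real.log 2 := Real.log_pos (by norm_num)
    have hsq : (2 : ℝ) ^ (k + 1) ≤ ((2 : ℝ) ^ k + 1) ^ 2 := by
      have h1 : (1 : ℝ) ≤ 2 ^ k := by exact_mod_cast Nat.one_le_two_pow (n := k)
      rw [pow_succ]
      nlinarith
    have hlogge : ((k : ℝ) + 1) * Real.log 2 / 2 ≤ Real.log ((2 : ℝ) ^ k + 1) := by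
      have := Real.log_le_log (by positivity) hsq
      rw [Real.log_pow] at this
      rw [show (((2:ℝ) ^ k + 1) ^ 2) = ((2:ℝ)^k+1)^(2:ℕ) by norm_num] at this
      rw [Real.log_pow] at this
      push_cast at this ⊢
      linarith
    have hloggenn : 0 ≤ ((k : ℝ) + 1) * Real.log 2 / 2 := by positivity
    have hdenom : 2 ^ k * (((k : ℝ) + 1) * Real.log 2 / 2) ^ 2 ≤
        (((2 ^ k : ℕ) : ℝ) + 1) * Real.log (((2 ^ k : ℕ) : ℝ) + 1) ^ 2 := by
      rw [hx]
      apply mul_le_mul (by linarith)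
      · exact pow_le_pow_left₀ hloggenn hlogge 2
      · positivity
      · positivity
    have hfle : f (2 ^ k) ≤ 1 / (2 ^ k * (((k : ℝ) + 1) * Real.log 2 / 2) ^ 2) := by
      apply one_div_le_one_div_of_le
      · positivity
      · exact hdenom
    calc (2 : ℝ) ^ k * f (2 ^ k)
        ≤ (2 : ℝ) ^ k * (1 / (2 ^ k * (((k : ℝ) + 1) * Real.log 2 / 2) ^ 2)) := by
          exact mul_le_mul_of_nonneg_left hfle (by positivity)
      _ = (4 / Real.log 2 ^ 2) * (1 / ((k : ℝ) + 1) ^ 2) := by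
          field_simp
          ring
  apply Summable.of_nonneg_of_le (fun k => by positivity) hbound
  apply Summable.mul_left
  have hs : Summable (fun n : ℕ => 1 / (n : ℝ) ^ 2) := by
    rw [Real.summable_one_div_nat_pow]
    norm_num
  have := (summable_nat_add_iff 1).mpr hs
  apply this.congr
  intro n
  push_cast
  ring

lemma summable_gmaj : Summable gmaj := by
  rw [← summable_nat_add_iff 2]
  have h1 : Summable (fun n : ℕ =>
      6 * (1 / ((((n + 1 : ℕ)) : ℝ) + 1) / Real.log ((((n + 1 : ℕ)) : ℝ) + 1) ^ 2)) := by
    have := ((summable_nat_add_iff 1).mpr summable_hfun).mul_left 6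
    apply this.congr
    intro n
    push_cast
    field_simp
  apply h1.congr
  intro n
  have hn2 : ¬ (n + 2 ≤ 1) := by omega
  unfold gmaj
  rw [if_neg hn2]
  push_cast
  field_simp
  ring

lemma two_le_nthPrime (j : ℕ) : 2 ≤ nthPrime j := by
  have := Nat.add_two_le_nth_prime (j - 1)
  unfold nthPrime; omega

lemma key_bound {j : ℕ} (hj16 : 16 ≤ j)
    (hLj : 2 * (L j : ℝ) * Real.log j ≤ j)
    (h2 : L (j - 1) < L j) :
    1 / (nthPrime j : ℝ) ≤ gmaj (Acount j) := by
  have h1 : 1 ≤ j := by omega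
  have hp2 : (2 : ℝ) ≤ (nthPrime j : ℝ) := by exact_mod_cast two_le_nthPrime j
  have hppos : (0 : ℝ) < (nthPrime j : ℝ) := by linarith
  set a := Acount j with ha
  by_cases hA : a ≤ 1
  · rw [gmaj, if_pos hA]
    rw [div_le_one hppos]; linarith
  · have ha2 : 2 ≤ a := by omega
    rw [gmaj, if_neg hA]
    have haL : (a : ℝ) ≤ (L j : ℝ) := by exact_mod_cast Acount_le_L j
    have haj : (a : ℝ) ≤ (j : ℝ) := by exact_mod_cast Acount_le_self j
    have ha2' : (2 : ℝ) ≤ (a : ℝ) := by exact_mod_cast ha2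
    have hloga : 0 < Real.log a := Real.log_pos (by linarith)
    have hlogaj : Real.log a ≤ Real.log j := Real.log_le_log (by linarith) haj
    have hlogj : 0 < Real.log j := lt_of_lt_of_le hloga hlogaj
    have hD : 2 * ((a : ℝ) * Real.log a ^ 2) ≤ (j : ℝ) * Real.log j := by
      calc 2 * ((a : ℝ) * Real.log a ^ 2) = (2 * a * Real.log a) * Real.log a := by ring
        _ ≤ (2 * (L j : ℝ) * Real.log j) * Real.log a := by
            apply mul_le_mul_of_nonneg_right _ hloga.le
            have := mul_le_mul_of_nonneg_right haL (by norm_num : (0:ℝ) ≤ 2)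
            nlinarith
        _ ≤ (j : ℝ) * Real.log a := mul_le_mul_of_nonneg_right hLj hloga.le
        _ ≤ (j : ℝ) * Real.log j := by
            apply mul_le_mul_of_nonneg_left hlogaj (by positivity)
    have hpl : (j : ℝ) * Real.log j ≤ 12 * (nthPrime j : ℝ) := nthPrime_lower hj16
    rw [div_le_div_iff₀ hppos (by positivity)]
    nlinarith

/-- If `L n = o(n / log n)`, then the sum of reciprocals of the awkward primes converges. -/
theorem awkward_primes_reciprocal_sum_converges
    (h : (fun n : ℕ => (L n : ℝ)) =o[Filter.atTop] fun n : ℕ => (n : ℝ) / Real.log n) :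
    Summable (fun j : ℕ =>
      if 1 ≤ j ∧ L (j - 1) < L j then (1 : ℝ) / (nthPrime j : ℝ) else 0) := by
  classical
  set f : ℕ → ℝ := fun j => if 1 ≤ j ∧ L (j - 1) < L j then (1 : ℝ) / (nthPrime j : ℝ) else 0
    with hfdef
  have hf0 : ∀ j, 0 ≤ f j := by
    intro j; simp only [hfdef]; split_ifs
    · positivity
    · exact le_rfl
  obtain ⟨N₁, hN₁⟩ := Filter.eventually_atTop.mp (h.def (by norm_num : (0:ℝ) < 1/2))
  set N₀ := max N₁ 16 with hN₀
  have hkey : ∀ j, N₀ ≤ j → 1 ≤ j ∧ L (j - 1) < L j → f j ≤ gmaj (Acount j) := by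
    intro j hj hawk
    have hj16 : 16 ≤ j := le_trans (le_max_right _ _) hj
    have hjN₁ : N₁ ≤ j := le_trans (le_max_left _ _) hj
    have hlogj : 0 < Real.log j := Real.log_pos (by exact_mod_cast (by omega : 1 < j))
    have hb := hN₁ j hjN₁
    rw [Real.norm_eq_abs, Real.norm_eq_abs] at hb
    rw [abs_of_nonneg (by positivity), abs_of_nonneg (by positivity)] at hb
    have hLj : 2 * (L j : ℝ) * Real.log j ≤ j := by
      have h' := mul_le_mul_of_nonneg_right hb hlogj.le
      rw [mul_assoc, div_mul_cancel₀ _ hlogj.ne'] at h'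
      linarith
    have := key_bound hj16 hLj hawk.2
    simpa [hfdef, hawk] using this
  apply summable_of_sum_range_le hf0
    (c := (∑ i ∈ Finset.range N₀, f i) + ∑' a, gmaj a)
  intro n
  have htsum0 : 0 ≤ ∑' a, gmaj a := tsum_nonneg gmaj_nonneg
  rcases le_or_gt n N₀ with hn | hn
  · have : ∑ i ∈ Finset.range n, f i ≤ ∑ i ∈ Finset.range N₀, f i :=
      Finset.sum_le_sum_of_subset_of_nonneg
        (Finset.range_subset_range.mpr hn) (fun i _ _ => hf0 i)
    linarith
  · rw [← Finset.sum_range_add_sum_Ico f hn.le]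
    have hIco : ∑ j ∈ Finset.Ico N₀ n, f j ≤ ∑' a, gmaj a := by
      set s := (Finset.Ico N₀ n).filter (fun j => 1 ≤ j ∧ L (j - 1) < L j) with hs
      have heq : ∑ j ∈ Finset.Ico N₀ n, f j = ∑ j ∈ s, f j := by
        rw [hs]
        refine (Finset.sum_filter_of_ne ?_).symm
        intro j _ hne
        by_contra hc
        exact hne (by simpa [hfdef, hc] using (fun hh => hc hh))
      rw [heq]
      have hstep : ∑ j ∈ s, f j ≤ ∑ j ∈ s, gmaj (Acount j) := by
        apply Finset.sum_le_sum
        intro j hj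
        rw [hs, Finset.mem_filter, Finset.mem_Ico] at hj
        exact hkey j hj.1.1 hj.2
      refine hstep.trans ?_
      have hinj : ∀ x ∈ s, ∀ y ∈ s, Acount x = Acount y → x = y := by
        intro x hx y hy hxy
        rw [hs, Finset.mem_filter] at hx hy
        by_contra hne
        rcases lt_or_gt_of_ne hne with hlt | hlt
        · exact absurd hxy (Nat.ne_of_lt (Acount_strict hx.2.1 hy.2.1 hlt hy.2.2))
        · exact absurd hxy.symm (Nat.ne_of_lt (Acount_strict hy.2.1 hx.2.1 hlt hx.2.2))
      have himg : ∑ j ∈ s, gmaj (Acount j) = ∑ a ∈ s.image Acount, gmaj a :=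
        (Finset.sum_image hinj).symm
      rw [himg]
      exact Summable.sum_le_tsum _ (fun a _ => gmaj_nonneg a) summable_gmaj
    have h1 : ∑ i ∈ Finset.range N₀, f i ≤ ∑ i ∈ Finset.range N₀, f i := le_refl _
    linarith
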